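/- For every finite nonempty set I of positive integers, Δ_≺ ∘ τ_I = (τ_I ⊗ id) ∘ Δ_≺ as linear maps WQSym_+ → WQSym_+ ⊗ WQSym_+. Moreover, τ_I maps TPrim into TPrim: if x ∈ Ker Δ_≺ ∩ Ker Δ_≻, then τ_I(x) ∈ Ker Δ_≺ ∩ Ker Δ_≻. -/

import Mathlib

open scoped TensorProduct Classical

/-- The maximum letter of a word, with `wmax [] = 0`. -/
def wmax (w : List ℕ) : ℕ := w.foldr max 0

/-- A word over the positive integers is packed if every letter from `1` to its maximum
occurs in it. -/
def IsPacked (w : List ℕ) : Prop :=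
  (∀ x ∈ w, 0 < x) ∧ ∀ i : ℕ, 0 < i → i ≤ wmax w → i ∈ w

/-- `pack w` replaces every occurrence of the `i`-th smallest distinct letter of `w` by `i`. -/
def pack (w : List ℕ) : List ℕ :=
  w.map (fun a => (w.dedup.filter (fun b => b < a)).length + 1)

/-- The ambient free `ℚ`-vector space on all words. -/
abbrev V : Type := List ℕ →₀ ℚ

noncomputable instance : Zero (V ⊗[ℚ] V) :=
  (inferInstance : AddZeroClass (V ⊗[ℚ] V)).toZero

/-- The basis element `R_w`. -/
noncomputable def Rw (w : List ℕ) : V := Finsupp.single w 1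

/-- `WQSym₊`: the span of the `R_w` over nonempty packed words `w`. -/
noncomputable def Wplus : Submodule ℚ V :=
  Submodule.span ℚ {x : V | ∃ w : List ℕ, IsPacked w ∧ w ≠ [] ∧ x = Rw w}

/-- A valid cut for `Δ_≺` at position `i`: `1 ≤ i ≤ |w| - 1`, the letter sets of the two
factors are disjoint, and all occurrences of the maximum letter lie in the first `i`
positions. -/
def okL (w : List ℕ) (i : ℕ) : Prop :=
  1 ≤ i ∧ i < w.length ∧ (∀ a ∈ w.take i, a ∉ w.drop i) ∧ wmax w ∉ w.drop i

/-- A valid cut for `Δ_≻` at position `i`: `1 ≤ i ≤ |w| - 1`, the letter sets of the two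
factors are disjoint, and all occurrences of the maximum letter lie in the last `n - i`
positions. -/
def okR (w : List ℕ) (i : ℕ) : Prop :=
  1 ≤ i ∧ i < w.length ∧ (∀ a ∈ w.take i, a ∉ w.drop i) ∧ wmax w ∉ w.take i

noncomputable def cutsL (w : List ℕ) : V ⊗[ℚ] V :=
  ((((List.range w.length).filter (fun i => decide (okL w i))).map
    (fun i => Rw (pack (w.take i)) ⊗ₜ[ℚ] Rw (pack (w.drop i)))) : List (V ⊗[ℚ] V)).sum

noncomputable def cutsR (w : List ℕ) : V ⊗[ℚ] V :=
  ((((List.range w.length).filter (fun i => decide (okR w i))).map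
    (fun i => Rw (pack (w.take i)) ⊗ₜ[ℚ] Rw (pack (w.drop i)))) : List (V ⊗[ℚ] V)).sum

/-- The left half-coproduct `Δ_≺` of `WQSym₊`. -/
noncomputable def deltaL : V →ₗ[ℚ] V ⊗[ℚ] V :=
  Finsupp.lsum ℚ fun w => LinearMap.toSpanSingleton ℚ (V ⊗[ℚ] V) (cutsL w)

/-- The right half-coproduct `Δ_≻` of `WQSym₊`. -/
noncomputable def deltaR : V →ₗ[ℚ] V ⊗[ℚ] V :=
  Finsupp.lsum ℚ fun w => LinearMap.toSpanSingleton ℚ (V ⊗[ℚ] V) (cutsR w)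

/-- The maximal letter of `w` occurs exactly at the (1-based) positions belonging to `I`. -/
def maxAt (w : List ℕ) (I : Finset ℕ) : Prop :=
  (∀ i ∈ I, 1 ≤ i ∧ i ≤ w.length) ∧
  ∀ j, j < w.length → (w.getD j 0 = wmax w ↔ j + 1 ∈ I)

/-- The projector `τ_I`: on a basis element `R_w`, it is `R_w` when the maximal letter
of `w` occurs exactly at the positions of `I`, and `0` otherwise. -/
noncomputable def tauI (I : Finset ℕ) : V →ₗ[ℚ] V :=
  Finsupp.lsum ℚ fun w => LinearMap.toSpanSingleton ℚ V
    (if maxAt w I then Rw w else 0)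

/-- The totally primitive elements of `WQSym₊`: `TPrim = Ker Δ_≺ ∩ Ker Δ_≻`. -/
noncomputable def TPrim : Submodule ℚ V :=
  Wplus ⊓ LinearMap.ker deltaL ⊓ LinearMap.ker deltaR

lemma wmax_cons (a : ℕ) (w : List ℕ) : wmax (a :: w) = max a (wmax w) := rfl

lemma wmax_le_iff {w : List ℕ} {m : ℕ} : wmax w ≤ m ↔ ∀ a ∈ w, a ≤ m := by
  induction w with
  | nil => simp [wmax]
  | cons a t ih => simp [wmax_cons, ih]

lemma le_wmax {w : List ℕ} {a : ℕ} (h : a ∈ w) : a ≤ wmax w :=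
  wmax_le_iff.mp le_rfl a h

lemma wmax_mem {w : List ℕ} (h : w ≠ []) : wmax w ∈ w := by
  induction w with
  | nil => exact absurd rfl h
  | cons a t ih =>
    rcases eq_or_ne t [] with rfl | ht
    · simp [wmax]
    · rcases le_total (wmax t) a with hle | hle
      · simp [wmax_cons, max_eq_left hle]
      · rw [wmax_cons, max_eq_right hle]
        exact List.mem_cons_of_mem _ (ih ht)

lemma wmax_eq_of {w : List ℕ} {m : ℕ} (hm : m ∈ w) (h : ∀ a ∈ w, a ≤ m) : wmax w = m :=
  le_antisymm (wmax_le_iff.mpr h) (le_wmax hm)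

lemma getD_mem {w : List ℕ} {j : ℕ} (h : j < w.length) : w.getD j 0 ∈ w := by
  rw [List.getD_eq_getElem _ _ h]; exact List.getElem_mem h

lemma getD_take {w : List ℕ} {i j : ℕ} (h : j < i) : (w.take i).getD j 0 = w.getD j 0 := by
  rw [List.getD_eq_getElem?_getD, List.getD_eq_getElem?_getD, List.getElem?_take, if_pos h]

lemma getD_drop (w : List ℕ) (i j : ℕ) : (w.drop i).getD j 0 = w.getD (i + j) 0 := by
  rw [List.getD_eq_getElem?_getD, List.getD_eq_getElem?_getD, List.getElem?_drop]

noncomputable def pv (w : List ℕ) (a : ℕ) : ℕ := (w.dedup.filter (fun b => b < a)).length + 1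

lemma pack_eq_map (w : List ℕ) : pack w = w.map (pv w) := rfl

lemma pv_card (w : List ℕ) (a : ℕ) :
    pv w a = (w.toFinset.filter (fun b => b < a)).card + 1 := by
  have hnd : (w.dedup.filter (fun b => b < a)).Nodup := w.nodup_dedup.filter _
  have h2 : (w.dedup.filter (fun b => b < a)).toFinset = w.toFinset.filter (fun b => b < a) := by
    ext x
    simp [List.mem_filter]
  rw [pv, ← List.toFinset_card_of_nodup hnd, h2]

lemma pv_mono {w : List ℕ} {a b : ℕ} (h : a ≤ b) : pv w a ≤ pv w b := by
  rw [pv_card, pv_card]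
  refine Nat.add_le_add_right (Finset.card_le_card ?_) 1
  exact Finset.monotone_filter_right _ (fun x _ hx => lt_of_lt_of_le hx h)

lemma pv_strict {w : List ℕ} {a b : ℕ} (ha : a ∈ w) (h : a < b) : pv w a < pv w b := by
  rw [pv_card, pv_card]
  refine Nat.add_lt_add_right (Finset.card_lt_card ?_) 1
  refine (Finset.ssubset_iff_of_subset
    (Finset.monotone_filter_right _ (fun x _ hx => lt_trans hx h))).mpr ?_
  exact ⟨a, Finset.mem_filter.mpr ⟨List.mem_toFinset.mpr ha, h⟩, fun hc =>
    lt_irrefl a (Finset.mem_filter.mp hc).2⟩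

lemma length_pack (w : List ℕ) : (pack w).length = w.length := List.length_map _

lemma getD_pack {w : List ℕ} {j : ℕ} (h : j < w.length) :
    (pack w).getD j 0 = pv w (w.getD j 0) := by
  rw [pack_eq_map, List.getD_eq_getElem _ _ (by simpa using h), List.getD_eq_getElem _ _ h,
    List.getElem_map]

lemma wmax_pack {w : List ℕ} (h : w ≠ []) : wmax (pack w) = pv w (wmax w) := by
  refine wmax_eq_of ?_ ?_
  · rw [pack_eq_map]; exact List.mem_map_of_mem (wmax_mem h)
  · rintro x hx
    rw [pack_eq_map] at hx
    rcases List.mem_map.mp hx with ⟨a, ha, rfl⟩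
    exact pv_mono (le_wmax ha)

lemma argmax_pack {w : List ℕ} {j : ℕ} (h : j < w.length) (hne : w ≠ []) :
    ((pack w).getD j 0 = wmax (pack w) ↔ w.getD j 0 = wmax w) := by
  rw [getD_pack h, wmax_pack hne]
  have hmem : w.getD j 0 ∈ w := by
    rw [List.getD_eq_getElem _ _ h]; exact List.getElem_mem h
  constructor
  · intro he
    by_contra hc
    exact absurd he (ne_of_lt (pv_strict hmem (lt_of_le_of_ne (le_wmax hmem) hc)))
  · intro he; rw [he]

def maxAtP (u v : List ℕ) (I : Finset ℕ) : Prop :=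
  (∀ i' ∈ I, u.length + 1 ≤ i' ∧ i' ≤ u.length + v.length) ∧
  ∀ j, j < v.length → (v.getD j 0 = wmax v ↔ u.length + j + 1 ∈ I)

section Cuts
variable {w : List ℕ} {i : ℕ} {I : Finset ℕ}

lemma cutL_maxAt (h : okL w i) : (maxAt (pack (w.take i)) I ↔ maxAt w I) := by
  obtain ⟨hi1, hi2, hdisj, hnd⟩ := h
  have hilen : i ≤ w.length := le_of_lt hi2
  have hlenu : (w.take i).length = i := by simp [List.length_take, min_eq_left hilen]
  have hune : w.take i ≠ [] := by
    intro hc; rw [hc] at hlenu; simp at hlenu; omega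
  have hwne : w ≠ [] := by
    intro hc; subst hc; simp at hi2
  -- max of w lives in the take
  have hmem : wmax w ∈ w.take i := by
    rcases List.mem_append.mp (by rw [List.take_append_drop]; exact wmax_mem hwne :
      wmax w ∈ w.take i ++ w.drop i) with h' | h'
    · exact h'
    · exact absurd h' hnd
  have hmaxu : wmax (w.take i) = wmax w :=
    wmax_eq_of hmem (fun a ha => le_wmax (List.mem_of_mem_take ha))
  -- positions ≥ i are not max positions of w
  have hnd' : ∀ j, i ≤ j → j < w.length → w.getD j 0 ≠ wmax w := by
    intro j hij hj hc
    apply hnd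
    have : (w.drop i).getD (j - i) 0 = w.getD j 0 := by
      rw [getD_drop]; congr 1; omega
    rw [← hc, ← this]
    exact getD_mem (by rw [List.length_drop]; omega)
  -- the chain for j < i
  have hchain : ∀ j, j < i →
      ((pack (w.take i)).getD j 0 = wmax (pack (w.take i)) ↔ w.getD j 0 = wmax w) := by
    intro j hj
    rw [argmax_pack (by omega) hune, getD_take hj, hmaxu]
  have hplen : (pack (w.take i)).length = i := by rw [length_pack, hlenu]
  constructor
  · rintro ⟨hI, hpos⟩
    rw [hplen] at hI hpos
    refine ⟨fun i' hi' => ⟨(hI i' hi').1, le_trans (hI i' hi').2 hilen⟩, fun j hj => ?_⟩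
    by_cases hji : j < i
    · rw [← hchain j hji]; exact hpos j hji
    · push_neg at hji
      constructor
      · intro hc; exact absurd hc (hnd' j hji hj)
      · intro hc
        have := (hI _ hc).2
        omega
  · rintro ⟨hI, hpos⟩
    refine ⟨fun i' hi' => ?_, fun j hj => ?_⟩
    · obtain ⟨h1, h2⟩ := hI i' hi'
      rw [hplen]
      refine ⟨h1, ?_⟩
      by_contra hc
      push_neg at hc
      have hjl : i' - 1 < w.length := by omega
      have := (hpos (i' - 1) hjl).mpr (by rwa [Nat.sub_add_cancel h1])
      exact hnd' (i' - 1) (by omega) hjl this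
    · rw [hplen] at hj
      rw [hchain j hj]
      exact hpos j (by omega)

lemma cutR_maxAt (h : okR w i) : (maxAtP (pack (w.take i)) (pack (w.drop i)) I ↔ maxAt w I) := by
  obtain ⟨hi1, hi2, hdisj, hnd⟩ := h
  have hilen : i ≤ w.length := le_of_lt hi2
  have hlenu : (w.take i).length = i := by simp [List.length_take, min_eq_left hilen]
  have hlenv : (w.drop i).length = w.length - i := by simp [List.length_drop]
  have hvne : w.drop i ≠ [] := by
    intro hc; rw [hc] at hlenv; simp at hlenv; omega
  have hwne : w ≠ [] := by
    intro hc; subst hc; simp at hi2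
  have hmem : wmax w ∈ w.drop i := by
    rcases List.mem_append.mp (by rw [List.take_append_drop]; exact wmax_mem hwne :
      wmax w ∈ w.take i ++ w.drop i) with h' | h'
    · exact absurd h' hnd
    · exact h'
  have hmaxv : wmax (w.drop i) = wmax w :=
    wmax_eq_of hmem (fun a ha => le_wmax (List.mem_of_mem_drop ha))
  have hnd' : ∀ j, j < i → w.getD j 0 ≠ wmax w := by
    intro j hj hc
    apply hnd
    rw [← hc, ← getD_take hj]
    exact getD_mem (by omega)
  have hchain : ∀ j, j < w.length - i →
      ((pack (w.drop i)).getD j 0 = wmax (pack (w.drop i)) ↔ w.getD (i + j) 0 = wmax w) := by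
    intro j hj
    rw [argmax_pack (by omega) hvne, getD_drop, hmaxv]
  have hplenu : (pack (w.take i)).length = i := by rw [length_pack, hlenu]
  have hplenv : (pack (w.drop i)).length = w.length - i := by rw [length_pack, hlenv]
  constructor
  · rintro ⟨hI, hpos⟩
    rw [hplenu] at hI hpos
    rw [hplenv] at hI hpos
    refine ⟨fun i' hi' => ?_, fun j hj => ?_⟩
    · obtain ⟨h1, h2⟩ := hI i' hi'
      exact ⟨by omega, by omega⟩
    · by_cases hji : j < i
      · constructor
        · intro hc; exact absurd hc (hnd' j hji)
        · intro hc
          have := (hI _ hc).1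
          omega
      · push_neg at hji
        have hj' : j - i < w.length - i := by omega
        have := hpos (j - i) hj'
        rw [hchain _ hj'] at this
        have harith : i + (j - i) = j := by omega
        rw [harith] at this
        rw [this]
  · rintro ⟨hI, hpos⟩
    refine ⟨fun i' hi' => ?_, fun j hj => ?_⟩
    · obtain ⟨h1, h2⟩ := hI i' hi'
      rw [hplenu, hplenv]
      refine ⟨?_, by omega⟩
      by_contra hc
      push_neg at hc
      have hji : i' - 1 < i := by omega
      have hjlen : i' - 1 < w.length := by omega
      have := (hpos (i' - 1) hjlen).mpr (by rwa [Nat.sub_add_cancel h1])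
      exact hnd' (i' - 1) hji this
    · rw [hplenv] at hj
      rw [hplenu, hchain j hj]
      exact hpos (i + j) (by omega)
end Cuts

-- basic evaluations
lemma tauI_single (I : Finset ℕ) (w : List ℕ) :
    tauI I (Rw w) = if maxAt w I then Rw w else 0 := by
  simp [tauI, Rw, Finsupp.lsum_single, LinearMap.toSpanSingleton_apply_one]

lemma deltaL_single (w : List ℕ) : deltaL (Rw w) = cutsL w := by
  simp [deltaL, Rw, Finsupp.lsum_single, LinearMap.toSpanSingleton_apply_one]

lemma deltaR_single (w : List ℕ) : deltaR (Rw w) = cutsR w := by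
  simp [deltaR, Rw, Finsupp.lsum_single, LinearMap.toSpanSingleton_apply_one]

-- the auxiliary projector on the tensor square
noncomputable def e : (V ⊗[ℚ] V) ≃ₗ[ℚ] (List ℕ × List ℕ →₀ ℚ) :=
  finsuppTensorFinsupp' ℚ (List ℕ) (List ℕ)

noncomputable def G (I : Finset ℕ) : (V ⊗[ℚ] V) →ₗ[ℚ] (V ⊗[ℚ] V) :=
  e.symm.toLinearMap ∘ₗ
    (Finsupp.lsum ℚ fun p : List ℕ × List ℕ => LinearMap.toSpanSingleton ℚ _
      (if maxAtP p.1 p.2 I then Finsupp.single p (1 : ℚ) else 0)) ∘ₗ e.toLinearMap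

lemma G_tmul (I : Finset ℕ) (u v : List ℕ) :
    G I (Rw u ⊗ₜ[ℚ] Rw v) = if maxAtP u v I then Rw u ⊗ₜ[ℚ] Rw v else 0 := by
  have he : e (Rw u ⊗ₜ[ℚ] Rw v) = Finsupp.single (u, v) 1 := by
    rw [Rw, Rw]
    show finsuppTensorFinsupp' ℚ (List ℕ) (List ℕ) _ = _
    rw [finsuppTensorFinsupp'_single_tmul_single, mul_one]
  simp only [G, LinearMap.comp_apply, LinearEquiv.coe_toLinearMap, he,
    Finsupp.lsum_single, LinearMap.toSpanSingleton_apply_one]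
  by_cases h : maxAtP u v I
  · rw [if_pos h, if_pos h, ← he, LinearEquiv.symm_apply_apply]
  · rw [if_neg h, if_neg h]; exact e.symm.map_zero

lemma mem_filter_okL {w : List ℕ} {i : ℕ}
    (h : i ∈ (List.range w.length).filter (fun i => decide (okL w i))) : okL w i := by
  simpa using (List.mem_filter.mp h).2

lemma mem_filter_okR {w : List ℕ} {i : ℕ}
    (h : i ∈ (List.range w.length).filter (fun i => decide (okR w i))) : okR w i := by
  simpa using (List.mem_filter.mp h).2

lemma keyL (I : Finset ℕ) (w : List ℕ) :
    deltaL (tauI I (Rw w)) =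
      (TensorProduct.map (tauI I) LinearMap.id) (deltaL (Rw w)) := by
  rw [tauI_single]
  by_cases h : maxAt w I
  · rw [if_pos h, deltaL_single]
    unfold cutsL
    rw [map_list_sum, List.map_map]
    congr 1
    apply List.map_congr_left
    intro i hi
    have hok := mem_filter_okL hi
    simp only [Function.comp, TensorProduct.map_tmul, LinearMap.id_coe, id_eq]
    rw [tauI_single, if_pos ((cutL_maxAt hok).mpr h)]
  · rw [if_neg h, map_zero, deltaL_single]
    unfold cutsL
    rw [map_list_sum, List.map_map]
    symm
    apply List.sum_eq_zero
    intro x hx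
    rcases List.mem_map.mp hx with ⟨i, hi, rfl⟩
    have hok := mem_filter_okL hi
    simp only [Function.comp, TensorProduct.map_tmul, LinearMap.id_coe, id_eq]
    rw [tauI_single, if_neg (fun hc => h ((cutL_maxAt hok).mp hc)), TensorProduct.zero_tmul]

lemma keyR (I : Finset ℕ) (w : List ℕ) :
    deltaR (tauI I (Rw w)) = G I (deltaR (Rw w)) := by
  rw [tauI_single]
  by_cases h : maxAt w I
  · rw [if_pos h, deltaR_single]
    unfold cutsR
    rw [map_list_sum, List.map_map]
    congr 1
    apply List.map_congr_left
    intro i hi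
    have hok := mem_filter_okR hi
    simp only [Function.comp]
    rw [G_tmul, if_pos ((cutR_maxAt hok).mpr h)]
  · rw [if_neg h, map_zero, deltaR_single]
    unfold cutsR
    rw [map_list_sum, List.map_map]
    symm
    apply List.sum_eq_zero
    intro x hx
    rcases List.mem_map.mp hx with ⟨i, hi, rfl⟩
    have hok := mem_filter_okR hi
    simp only [Function.comp]
    rw [G_tmul, if_neg (fun hc => h ((cutR_maxAt hok).mp hc))]

lemma single_eq_smul (w : List ℕ) (m : ℚ) : (Finsupp.single w m : V) = m • Rw w := by
  rw [Rw, Finsupp.smul_single', mul_one]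

lemma compL (I : Finset ℕ) :
    deltaL ∘ₗ tauI I = (TensorProduct.map (tauI I) LinearMap.id) ∘ₗ deltaL := by
  apply Finsupp.lhom_ext
  intro w m
  simp only [LinearMap.comp_apply, single_eq_smul, map_smul]
  rw [keyL]

lemma compR (I : Finset ℕ) : deltaR ∘ₗ tauI I = G I ∘ₗ deltaR := by
  apply Finsupp.lhom_ext
  intro w m
  simp only [LinearMap.comp_apply, single_eq_smul, map_smul]
  rw [keyR]

lemma tauI_mem_Wplus (I : Finset ℕ) {x : V} (hx : x ∈ Wplus) : tauI I x ∈ Wplus := by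
  refine Submodule.span_induction (p := fun x _ => tauI I x ∈ Wplus) ?_ ?_ ?_ ?_ hx
  · rintro x ⟨w, hp, hne, rfl⟩
    rw [tauI_single]
    split
    · exact Submodule.subset_span ⟨w, hp, hne, rfl⟩
    · exact Submodule.zero_mem _
  · show tauI I 0 ∈ Wplus
    rw [map_zero]; exact Submodule.zero_mem _
  · intro x y _ _ hx hy
    show tauI I (x + y) ∈ Wplus
    rw [map_add]; exact Submodule.add_mem _ hx hy
  · intro a x _ hx
    show tauI I (a • x) ∈ Wplus
    rw [map_smul]; exact Submodule.smul_mem _ _ hx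


theorem tauI_comm_deltaL_and_preserves_TPrim (I : Finset ℕ) (hne : I.Nonempty)
    (hpos : ∀ i ∈ I, 0 < i) :
    (∀ x ∈ Wplus, deltaL (tauI I x) =
      (TensorProduct.map (tauI I) LinearMap.id) (deltaL x)) ∧
    (∀ x ∈ TPrim, tauI I x ∈ TPrim) := by
  constructor
  · intro x _
    rw [← LinearMap.comp_apply, compL, LinearMap.comp_apply]
  · intro x hx
    rw [TPrim, Submodule.mem_inf, Submodule.mem_inf] at hx ⊢
    obtain ⟨⟨hw, hL⟩, hR⟩ := hx
    rw [LinearMap.mem_ker] at hL hR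
    refine ⟨⟨tauI_mem_Wplus I hw, ?_⟩, ?_⟩
    · rw [LinearMap.mem_ker, ← LinearMap.comp_apply, compL, LinearMap.comp_apply, hL, map_zero]
    · rw [LinearMap.mem_ker, ← LinearMap.comp_apply, compR, LinearMap.comp_apply, hR, map_zero]
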